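/- Let C be a non-crossing perfect matching (chord diagram) on indices {0,1,…,n−3} (n even). Define the region R_C of points (x_0,…,x_{n−3}) ∈ ℝ^{n−2} by: x_a = x_b for each chord {a,b} of C, and x_a < x_c whenever chord {a,b} surrounds chord {c,d}. Then for every point x in R_C, H(x) = 0, where H(x) = Σ_{a=0}^{n−3} x_a + 2·Σ_{a=0}^{n−4} Σ_{b=a+1}^{n−3} (−1)^{b−a}·min(x_a,…,x_b). -/

import Mathlib

/-- `wmin x a b` is the minimum `min(x_a, x_{a+1}, …, x_b)` of a window of consecutive
variables (as an infimum of the image of the finite nonempty interval). -/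
noncomputable def wmin (x : ℕ → ℝ) (a b : ℕ) : ℝ := sInf (x '' Set.Icc a b)

/-- The piecewise-linear function
`H(x) = Σ_{a=0}^{N-1} x_a + 2·Σ_{a=0}^{N-2} Σ_{b=a+1}^{N-1} (-1)^{b-a}·min(x_a,…,x_b)`,
where `N = n - 2` so that the variables are `x_0, …, x_{n-3}`. -/
noncomputable def Hfun (N : ℕ) (x : ℕ → ℝ) : ℝ :=
  (∑ a ∈ Finset.range N, x a) +
    2 * ∑ a ∈ Finset.range N, ∑ b ∈ Finset.Ico (a + 1) N, (-1 : ℝ) ^ (b - a) * wmin x a b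

lemma wmin_self (x : ℕ → ℝ) (a : ℕ) : wmin x a a = x a := by
  simp [wmin]

lemma wmin_le (x : ℕ → ℝ) {a j b : ℕ} (h1 : a ≤ j) (h2 : j ≤ b) : wmin x a b ≤ x j := by
  apply csInf_le ((Set.finite_Icc a b).image x).bddBelow
  exact ⟨j, ⟨h1, h2⟩, rfl⟩

lemma wmin_succ (x : ℕ → ℝ) {a b : ℕ} (h : a ≤ b) :
    wmin x a (b + 1) = min (wmin x a b) (x (b + 1)) := by
  have hs : Set.Icc a (b + 1) = Set.Icc a b ∪ {b + 1} := by
    ext j; simp only [Set.mem_Icc, Set.mem_union, Set.mem_singleton_iff]; omega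
  rw [wmin, hs, Set.image_union, Set.image_singleton,
    csInf_union ((Set.finite_Icc a b).image x).bddBelow
      (Set.Nonempty.image x (Set.nonempty_Icc.2 h)) bddBelow_singleton
      (Set.singleton_nonempty _)]
  simp [wmin, min_def, csInf_singleton]

lemma wmin_congr {x y : ℕ → ℝ} {a b : ℕ} (h : ∀ j, a ≤ j → j ≤ b → x j = y j) :
    wmin x a b = wmin y a b := by
  unfold wmin
  congr 1
  exact Set.image_congr fun j hj => h j hj.1 hj.2

lemma wmin_left (x : ℕ → ℝ) {a b : ℕ} (h : a < b) :
    wmin x a b = min (x a) (wmin x (a + 1) b) := by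
  induction b, h using Nat.le_induction with
  | base => rw [wmin_succ x le_rfl, wmin_self, wmin_self]
  | succ b hb ih =>
    rw [wmin_succ x (by omega), wmin_succ x (by omega), ih, min_assoc]

section Step

variable {y : ℕ → ℝ} {i : ℕ}

/-- shifted function -/
noncomputable def shf (y : ℕ → ℝ) (i : ℕ) : ℕ → ℝ := fun j => if j < i then y j else y (j + 2)

lemma L1 (hv : y (i + 1) = y i) {a : ℕ} (ha : a ≤ i) : wmin y a (i + 1) = wmin y a i := by
  rw [wmin_succ y ha, hv, min_eq_left (wmin_le y ha le_rfl)]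

lemma L2 (hv : y (i + 1) = y i) {b : ℕ} (hb : i + 1 ≤ b) : wmin y i b = wmin y (i + 1) b := by
  rcases Nat.eq_or_lt_of_le hb with h | h
  · rw [← h, L1 hv le_rfl, wmin_self, wmin_self]; exact hv.symm
  · rw [wmin_left y (by omega), min_eq_right]
    calc wmin y (i+1) b ≤ y (i+1) := wmin_le y le_rfl (by omega)
    _ = y i := hv

lemma E1 {a b : ℕ} (hb : b < i) : wmin (shf y i) a b = wmin y a b :=
  wmin_congr fun j _ hj => by simp [shf, lt_of_le_of_lt hj hb]

lemma E2 {a b : ℕ} (ha : i ≤ a) (hab : a ≤ b) :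
    wmin (shf y i) a b = wmin y (a + 2) (b + 2) := by
  induction b, hab using Nat.le_induction with
  | base => rw [wmin_self, wmin_self]; simp [shf, Nat.not_lt.2 ha]
  | succ b hb ih =>
    have h1 : shf y i (b + 1) = y (b + 3) := by
      simp [shf, show ¬ (b + 1 < i) by omega]
    rw [wmin_succ (shf y i) hb, ih, h1, show b + 1 + 2 = b + 2 + 1 from rfl,
      wmin_succ y (show a + 2 ≤ b + 2 by omega)]

lemma E3 (hv : y (i + 1) = y i) (hle : ∀ j, y j ≤ y i) {a b : ℕ} (ha : a < i) (hb : i ≤ b) :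
    wmin (shf y i) a b = wmin y a (b + 2) := by
  induction b, hb using Nat.le_induction with
  | base =>
    obtain ⟨k, rfl⟩ : ∃ k, i = k + 1 := ⟨i - 1, by omega⟩
    have hak : a ≤ k := by omega
    rw [wmin_succ _ hak, E1 (a := a) (b := k) (by omega),
      show k + 1 + 2 = k + 2 + 1 by ring, wmin_succ y (by omega),
      wmin_succ y (by omega), wmin_succ y hak]
    have h1 : y (k + 1 + 1) = y (k + 1) := hv
    have h2 : wmin y a k ≤ y (k + 1) := le_trans (wmin_le y le_rfl hak) (hle a)
    have : shf y (k+1) (k+1) = y (k + 1 + 2) := by simp [shf]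
    rw [this, h1]
    rw [min_eq_left h2, min_eq_left h2]
  | succ b hb ih =>
    have h1 : shf y i (b + 1) = y (b + 3) := by
      simp [shf, show ¬ (b + 1 < i) by omega]
    rw [wmin_succ (shf y i) (show a ≤ b by omega), ih, h1,
      show b + 1 + 2 = b + 2 + 1 from rfl, wmin_succ y (show a ≤ b + 2 by omega)]

end Step

open Finset in
noncomputable def Gfun (N : ℕ) (x : ℕ → ℝ) : ℝ :=
  ∑ a ∈ range N, ∑ b ∈ Ico a N, (-1 : ℝ) ^ (b - a) * wmin x a b

open Finset in
lemma Gfun_eq (N : ℕ) (x : ℕ → ℝ) :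
    Gfun N x = (∑ a ∈ range N, x a)
      + ∑ a ∈ range N, ∑ b ∈ Ico (a + 1) N, (-1 : ℝ) ^ (b - a) * wmin x a b := by
  unfold Gfun
  rw [← Finset.sum_add_distrib]
  refine Finset.sum_congr rfl fun a ha => ?_
  rw [Finset.sum_eq_sum_Ico_succ_bot (Finset.mem_range.1 ha)]
  simp [wmin_self]

lemma Hfun_eq_Gfun (N : ℕ) (x : ℕ → ℝ) :
    Hfun N x = 2 * Gfun N x - ∑ a ∈ Finset.range N, x a := by
  rw [Gfun_eq]; unfold Hfun; ring

open Finset in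
lemma Gfun_step {y : ℕ → ℝ} {i m : ℕ} (him : i ≤ m) (hv : y (i + 1) = y i)
    (hle : ∀ j, y j ≤ y i) :
    Gfun (m + 2) y = y i + Gfun m (shf y i) := by
  set F : ℕ → ℝ := fun a => ∑ b ∈ Ico a (m + 2), (-1 : ℝ) ^ (b - a) * wmin y a b with hF
  set F' : ℕ → ℝ := fun a => ∑ b ∈ Ico a m, (-1 : ℝ) ^ (b - a) * wmin (shf y i) a b with hF'
  have CA : ∀ a < i, F a = F' a := by
    intro a ha
    have split1 : F a = (∑ b ∈ Ico a i, (-1 : ℝ) ^ (b - a) * wmin y a b)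
        + ∑ b ∈ Ico i (m + 2), (-1 : ℝ) ^ (b - a) * wmin y a b := by
      rw [hF]; exact (Finset.sum_Ico_consecutive _ (by omega) (by omega)).symm
    have split2 : (∑ b ∈ Ico i (m + 2), (-1 : ℝ) ^ (b - a) * wmin y a b)
        = (-1 : ℝ) ^ (i - a) * wmin y a i + (-1 : ℝ) ^ (i + 1 - a) * wmin y a (i + 1)
          + ∑ b ∈ Ico (i + 2) (m + 2), (-1 : ℝ) ^ (b - a) * wmin y a b := by
      rw [Finset.sum_eq_sum_Ico_succ_bot (show i < m + 2 by omega),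
        Finset.sum_eq_sum_Ico_succ_bot (show i + 1 < m + 2 by omega)]
      ring
    have hcancel : (-1 : ℝ) ^ (i - a) * wmin y a i
        + (-1 : ℝ) ^ (i + 1 - a) * wmin y a (i + 1) = 0 := by
      rw [L1 hv (le_of_lt ha), show i + 1 - a = (i - a) + 1 by omega, pow_succ]
      ring
    have tail : (∑ b ∈ Ico (i + 2) (m + 2), (-1 : ℝ) ^ (b - a) * wmin y a b)
        = ∑ b ∈ Ico i m, (-1 : ℝ) ^ (b - a) * wmin (shf y i) a b := by
      rw [show i + 2 = i + 2 by rfl, ← Finset.sum_Ico_add'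
        (fun b => (-1 : ℝ) ^ (b - a) * wmin y a b) i m 2]
      refine Finset.sum_congr rfl fun b hb => ?_
      have hbi : i ≤ b := (Finset.mem_Ico.1 hb).1
      rw [E3 hv hle ha hbi, show b + 2 - a = (b - a) + 2 by omega, pow_add]
      ring_nf
    have head : (∑ b ∈ Ico a i, (-1 : ℝ) ^ (b - a) * wmin y a b)
        = ∑ b ∈ Ico a i, (-1 : ℝ) ^ (b - a) * wmin (shf y i) a b := by
      refine Finset.sum_congr rfl fun b hb => ?_
      rw [E1 (Finset.mem_Ico.1 hb).2]
    rw [split1, split2, hcancel, tail, head, hF']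
    simp only [zero_add]
    exact Finset.sum_Ico_consecutive _ (by omega) him
  have CB : F i + F (i + 1) = y i := by
    have e1 : F i = (∑ b ∈ Ico (i + 2) (m + 2), (-1 : ℝ) ^ (b - i) * wmin y i b) := by
      rw [hF]; beta_reduce
      rw [Finset.sum_eq_sum_Ico_succ_bot (show i < m + 2 by omega),
        Finset.sum_eq_sum_Ico_succ_bot (show i + 1 < m + 2 by omega)]
      have : wmin y i (i + 1) = y i := by
        rw [wmin_succ y le_rfl, wmin_self, hv, min_self]
      rw [this, wmin_self, Nat.sub_self, show i + 1 - i = 1 by omega]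
      ring
    have e2 : F (i + 1) = y i
        + ∑ b ∈ Ico (i + 2) (m + 2), (-1 : ℝ) ^ (b - (i + 1)) * wmin y (i + 1) b := by
      rw [hF]; beta_reduce
      rw [Finset.sum_eq_sum_Ico_succ_bot (show i + 1 < m + 2 by omega)]
      rw [wmin_self, Nat.sub_self, hv]
      ring
    rw [e1, e2, ← add_assoc, add_comm _ (y i), add_assoc, ← Finset.sum_add_distrib]
    have : ∀ b ∈ Ico (i + 2) (m + 2),
        (-1 : ℝ) ^ (b - i) * wmin y i b + (-1 : ℝ) ^ (b - (i + 1)) * wmin y (i + 1) b = 0 := by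
      intro b hb
      have hbi : i + 2 ≤ b := (Finset.mem_Ico.1 hb).1
      rw [← L2 hv (by omega), show b - i = (b - (i + 1)) + 1 by omega, pow_succ]
      ring
    rw [Finset.sum_congr rfl this]
    simp
  have CC : ∀ a, i ≤ a → F (a + 2) = F' a := by
    intro a ha
    rw [hF, hF']; beta_reduce
    rw [← Finset.sum_Ico_add'
      (fun b => (-1 : ℝ) ^ (b - (a + 2)) * wmin y (a + 2) b) a m 2]
    refine Finset.sum_congr rfl fun b hb => ?_
    have hab : a ≤ b := (Finset.mem_Ico.1 hb).1
    rw [E2 ha hab, show b + 2 - (a + 2) = b - a by omega]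
  have main : Gfun (m + 2) y = ∑ a ∈ range (m + 2), F a := rfl
  rw [main, range_eq_Ico,
    ← Finset.sum_Ico_consecutive F (show 0 ≤ i by omega) (show i ≤ m + 2 by omega),
    Finset.sum_eq_sum_Ico_succ_bot (show i < m + 2 by omega),
    Finset.sum_eq_sum_Ico_succ_bot (show i + 1 < m + 2 by omega)]
  have tailF : (∑ a ∈ Ico (i + 2) (m + 2), F a) = ∑ a ∈ Ico i m, F' a := by
    rw [← Finset.sum_Ico_add' F i m 2]
    exact Finset.sum_congr rfl fun a ha => CC a (Finset.mem_Ico.1 ha).1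
  have headF : (∑ a ∈ Ico 0 i, F a) = ∑ a ∈ Ico 0 i, F' a :=
    Finset.sum_congr rfl fun a ha => CA a (Finset.mem_Ico.1 ha).2
  rw [tailF, headF]
  have : Gfun m (shf y i) = ∑ a ∈ Ico 0 i, F' a + ∑ a ∈ Ico i m, F' a := by
    rw [Finset.sum_Ico_consecutive F' (by omega) him, hF']
    unfold Gfun
    rw [range_eq_Ico]
  rw [this]
  have := CB
  ring_nf
  ring_nf at this ⊢
  linarith [CB]

open Finset in
lemma sum_step {y : ℕ → ℝ} {i m : ℕ} (him : i ≤ m) (hv : y (i + 1) = y i) :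
    (∑ a ∈ range (m + 2), y a) = y i + y i + ∑ a ∈ range m, shf y i a := by
  have h1 : (∑ a ∈ range m, shf y i a)
      = (∑ a ∈ Ico 0 i, y a) + ∑ a ∈ Ico (i + 2) (m + 2), y a := by
    rw [range_eq_Ico, ← Finset.sum_Ico_consecutive _ (show 0 ≤ i by omega) him]
    congr 1
    · exact Finset.sum_congr rfl fun a ha => by
        simp [shf, (Finset.mem_Ico.1 ha).2]
    · rw [← Finset.sum_Ico_add' y i m 2]
      exact Finset.sum_congr rfl fun a ha => by
        simp [shf, show ¬ (a < i) from by have := (Finset.mem_Ico.1 ha).1; omega]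
  rw [h1, range_eq_Ico, ← Finset.sum_Ico_consecutive y (show 0 ≤ i by omega)
      (show i ≤ m + 2 by omega),
    Finset.sum_eq_sum_Ico_succ_bot (show i < m + 2 by omega),
    Finset.sum_eq_sum_Ico_succ_bot (show i + 1 < m + 2 by omega), hv]
  ring

lemma Hfun_step {y : ℕ → ℝ} {i m : ℕ} (him : i ≤ m) (hv : y (i + 1) = y i)
    (hle : ∀ j, y j ≤ y i) :
    Hfun (m + 2) y = Hfun m (shf y i) := by
  rw [Hfun_eq_Gfun, Hfun_eq_Gfun, Gfun_step him hv hle, sum_step him hv]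
  ring

lemma Hfun_congr {N : ℕ} {x y : ℕ → ℝ} (h : ∀ j < N, x j = y j) :
    Hfun N x = Hfun N y := by
  unfold Hfun
  congr 1
  · exact Finset.sum_congr rfl fun a ha => h a (Finset.mem_range.1 ha)
  congr 1
  refine Finset.sum_congr rfl fun a ha => Finset.sum_congr rfl fun b hb => ?_
  have hbN : b < N := (Finset.mem_Ico.1 hb).2
  rw [wmin_congr (x := x) (y := y) fun j _ hj => h j (lt_of_le_of_lt hj hbN)]

/-- A non-crossing perfect matching (non-crossing chord diagram) of the `N` points
`0, 1, …, N-1` on a line: chords are ordered pairs `(a, b)` with `a < b < N`, every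
point `i < N` is the endpoint of exactly one chord, and no two chords interleave
as `a < c < b < d`. -/
def IsNCMatchingN (N : ℕ) (M : Finset (ℕ × ℕ)) : Prop :=
  (∀ p ∈ M, p.1 < p.2 ∧ p.2 < N) ∧
  (∀ i < N, ∃! p : ℕ × ℕ, p ∈ M ∧ (p.1 = i ∨ p.2 = i)) ∧
  (∀ p ∈ M, ∀ q ∈ M, ¬(p.1 < q.1 ∧ q.1 < p.2 ∧ p.2 < q.2))

lemma main_zero : ∀ (N : ℕ) (M : Finset (ℕ × ℕ)) (x : ℕ → ℝ),
    IsNCMatchingN N M → (∀ p ∈ M, x p.1 = x p.2) →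
    (∀ p ∈ M, ∀ q ∈ M, p.1 < q.1 → q.2 < p.2 → x p.1 < x q.1) →
    Hfun N x = 0 := by
  intro N
  induction N using Nat.strong_induction_on with
  | _ N IH =>
    intro M x hM heq hlt
    obtain ⟨hrange, huniq, hcross⟩ := hM
    rcases Nat.eq_zero_or_pos N with h0 | hpos
    · subst h0; simp [Hfun]
    have huniq' : ∀ j, j < N → ∀ q ∈ M, ∀ r ∈ M,
        (q.1 = j ∨ q.2 = j) → (r.1 = j ∨ r.2 = j) → q = r := by
      intro j hj q hq r hr h1 h2
      obtain ⟨s, -, hsu⟩ := huniq j hj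
      rw [hsu q ⟨hq, h1⟩, hsu r ⟨hr, h2⟩]
    obtain ⟨p0, ⟨hp0M, -⟩, -⟩ := huniq 0 hpos
    obtain ⟨p, hpM, hmax⟩ := Finset.exists_max_image M (fun q => x q.1) ⟨p0, hp0M⟩
    set i := p.1 with hi
    have hp12 : p.1 < p.2 ∧ p.2 < N := hrange p hpM
    have hadj : p.2 = i + 1 := by
      by_contra hne
      have h2 : i + 1 < p.2 := by omega
      obtain ⟨q, ⟨hqM, hq⟩, -⟩ := huniq (i + 1) (by omega)
      rcases hq with hq1 | hq2
      · rcases lt_trichotomy q.2 p.2 with h | h | h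
        · have h1 := hlt p hpM q hqM (by omega) h
          have h2 := hmax q hqM
          linarith
        · have : q = p := huniq' p.2 hp12.2 q hqM p hpM (Or.inr h) (Or.inr rfl)
          subst this
          omega
        · exact hcross p hpM q hqM ⟨by omega, by omega, h⟩
      · have hq1i : q.1 < i + 1 := by have := (hrange q hqM).1; omega
        rcases Nat.eq_or_lt_of_le (show q.1 ≤ i by omega) with h | h
        · have : q = p := huniq' i (by omega) q hqM p hpM (Or.inl h) (Or.inl rfl)
          subst this
          omega
        · exact hcross q hqM p hpM ⟨h, by omega, by omega⟩
    have hiN : i + 1 < N := by omega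
    have hv : x (i + 1) = x i := by
      rw [← hadj]; exact (heq p hpM).symm
    have hle : ∀ j < N, x j ≤ x i := by
      intro j hj
      obtain ⟨q, ⟨hqM, hq⟩, -⟩ := huniq j hj
      rcases hq with h | h
      · rw [← h]; exact hmax q hqM
      · rw [← h, ← heq q hqM]; exact hmax q hqM
    obtain ⟨m, hm⟩ : ∃ m, N = m + 2 := ⟨N - 2, by omega⟩
    have him : i ≤ m := by omega
    set v := x i with hvv
    set y : ℕ → ℝ := fun j => if j < N then x j else v with hy
    have hyx : ∀ j < N, y j = x j := fun j hj => by simp [hy, hj]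
    have hcong : Hfun N x = Hfun N y := Hfun_congr fun j hj => (hyx j hj).symm
    have hvy : y (i + 1) = y i := by
      rw [hyx _ hiN, hyx _ (by omega), hv]
    have hley : ∀ j, y j ≤ y i := by
      intro j
      have hyi : y i = v := by rw [hyx i (show i < N by omega)]
      rw [hyi]
      by_cases hj : j < N
      · rw [hyx j hj]; exact hle j hj
      · have : y j = v := by simp [hy, hj]
        rw [this]
    rw [hcong, hm, Hfun_step him hvy hley]
    -- construct the reduced matching
    set d : ℕ → ℕ := fun j => if j < i then j else j - 2 with hd
    set M' : Finset (ℕ × ℕ) := (M.erase p).image (fun q => (d q.1, d q.2)) with hM'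
    have hok : ∀ q ∈ M.erase p, (q.1 ≠ i ∧ q.1 ≠ i + 1) ∧ (q.2 ≠ i ∧ q.2 ≠ i + 1) := by
      intro q hq
      have hqM := Finset.mem_of_mem_erase hq
      have hqp := Finset.ne_of_mem_erase hq
      have e1 : ∀ h : q.1 = i ∨ q.2 = i, q = p := fun h =>
        huniq' i (by omega) q hqM p hpM h (Or.inl rfl)
      have e2 : ∀ h : q.1 = i + 1 ∨ q.2 = i + 1, q = p := fun h =>
        huniq' (i + 1) hiN q hqM p hpM h (Or.inr hadj)
      refine ⟨⟨fun h => hqp (e1 (Or.inl h)), fun h => hqp (e2 (Or.inl h))⟩,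
        ⟨fun h => hqp (e1 (Or.inr h)), fun h => hqp (e2 (Or.inr h))⟩⟩
    -- d is an order iso on ok points
    have d_lt : ∀ j k : ℕ, (j ≠ i ∧ j ≠ i + 1) → (k ≠ i ∧ k ≠ i + 1) →
        (d j < d k ↔ j < k) := by
      intro j k hj hk
      simp only [hd]
      split_ifs <;> omega
    have d_sig : ∀ j : ℕ, j < m → ∃ u, u < N ∧ (u ≠ i ∧ u ≠ i + 1) ∧ d u = j := by
      intro j hj
      refine ⟨if j < i then j else j + 2, ?_⟩
      simp only [hd]
      split_ifs <;> omega
    have d_inj : ∀ j k : ℕ, (j ≠ i ∧ j ≠ i + 1) → (k ≠ i ∧ k ≠ i + 1) →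
        d j = d k → j = k := by
      intro j k hj hk h
      rcases lt_trichotomy j k with hc | hc | hc
      · have := (d_lt j k hj hk).2 hc; omega
      · exact hc
      · have := (d_lt k j hk hj).2 hc; omega
    have d_val : ∀ j, j < N → (j ≠ i ∧ j ≠ i + 1) → shf y i (d j) = x j := by
      intro j hjN hj
      rcases Nat.lt_or_ge j i with h | h
      · have : d j = j := by simp [hd, h]
        rw [this]
        simp only [shf, if_pos h]
        exact hyx j hjN
      · have hji : i + 2 ≤ j := by omega
        have h1 : d j = j - 2 := by simp [hd, show ¬ j < i by omega]
        have h2 : ¬ (j - 2 < i) := by omega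
        rw [h1]
        simp only [shf, if_neg h2]
        rw [show j - 2 + 2 = j by omega]
        exact hyx j hjN
    have hNC' : IsNCMatchingN m M' := by
      refine ⟨?_, ?_, ?_⟩
      · intro p' hp'
        obtain ⟨q, hq, rfl⟩ := Finset.mem_image.1 hp'
        obtain ⟨hq1, hq2⟩ := hok q hq
        have hr := hrange q (Finset.mem_of_mem_erase hq)
        refine ⟨(d_lt q.1 q.2 hq1 hq2).2 hr.1, ?_⟩
        simp only [hd]
        split_ifs <;> omega
      · intro j hj
        obtain ⟨u, huN, huok, hdu⟩ := d_sig j hj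
        obtain ⟨q, ⟨hqM, hq⟩, -⟩ := huniq u huN
        have hqp : q ≠ p := by
          intro h
          subst h
          rcases hq with h | h
          · exact huok.1 (by omega)
          · exact huok.2 (by rw [← h, hadj])
        have hqE : q ∈ M.erase p := Finset.mem_erase.2 ⟨hqp, hqM⟩
        obtain ⟨hq1, hq2⟩ := hok q hqE
        refine ⟨(d q.1, d q.2), ⟨Finset.mem_image_of_mem _ hqE, ?_⟩, ?_⟩
        · rcases hq with h | h
          · exact Or.inl (by rw [h, hdu])
          · exact Or.inr (by rw [h, hdu])
        · rintro r' ⟨hr'M, hr'⟩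
          obtain ⟨r, hrE, hre⟩ := Finset.mem_image.1 hr'M
          have hrM := Finset.mem_of_mem_erase hrE
          obtain ⟨hr1, hr2⟩ := hok r hrE
          have hend : r.1 = u ∨ r.2 = u := by
            rcases hr' with h | h
            · left
              refine d_inj r.1 u hr1 huok ?_
              rw [hdu, ← h, ← hre]
            · right
              refine d_inj r.2 u hr2 huok ?_
              rw [hdu, ← h, ← hre]
          have : r = q := huniq' u huN r hrM q hqM hend hq
          rw [← hre, this]
      · rintro p' hp' q' hq' ⟨h1, h2, h3⟩
        obtain ⟨r, hrE, rfl⟩ := Finset.mem_image.1 hp'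
        obtain ⟨s, hsE, rfl⟩ := Finset.mem_image.1 hq'
        obtain ⟨hr1, hr2⟩ := hok r hrE
        obtain ⟨hs1, hs2⟩ := hok s hsE
        exact hcross r (Finset.mem_of_mem_erase hrE) s (Finset.mem_of_mem_erase hsE)
          ⟨(d_lt _ _ hr1 hs1).1 h1, (d_lt _ _ hs1 hr2).1 h2, (d_lt _ _ hr2 hs2).1 h3⟩
    have heq' : ∀ p' ∈ M', shf y i p'.1 = shf y i p'.2 := by
      intro p' hp'
      obtain ⟨q, hq, rfl⟩ := Finset.mem_image.1 hp'
      obtain ⟨hq1, hq2⟩ := hok q hq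
      have hqM := Finset.mem_of_mem_erase hq
      have hr := hrange q hqM
      rw [d_val q.1 (by omega) hq1, d_val q.2 hr.2 hq2]
      exact heq q hqM
    have hlt' : ∀ p' ∈ M', ∀ q' ∈ M', p'.1 < q'.1 → q'.2 < p'.2 →
        shf y i p'.1 < shf y i q'.1 := by
      intro p' hp' q' hq' h1 h2
      obtain ⟨r, hrE, rfl⟩ := Finset.mem_image.1 hp'
      obtain ⟨s, hsE, rfl⟩ := Finset.mem_image.1 hq'
      obtain ⟨hr1, hr2⟩ := hok r hrE
      obtain ⟨hs1, hs2⟩ := hok s hsE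
      have hrM := Finset.mem_of_mem_erase hrE
      have hsM := Finset.mem_of_mem_erase hsE
      have hrr := hrange r hrM
      have hss := hrange s hsM
      rw [d_val r.1 (by omega) hr1, d_val s.1 (by omega) hs1]
      exact hlt r hrM s hsM ((d_lt _ _ hr1 hs1).1 h1) ((d_lt _ _ hs2 hr2).1 h2)
    exact IH m (by omega) M' (shf y i) hNC' heq' hlt'

/-- Let `C` be a non-crossing chord diagram on indices `{0, 1, …, n-3}` (`n` even), and
let `x` lie in the region `R_C`: `x_a = x_b` for each chord `{a,b}` of `C`, and
`x_a < x_c` whenever chord `{a,b}` surrounds chord `{c,d}`. Then `H(x) = 0`. -/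
theorem Hfun_eq_zero_on_region (n : ℕ) (hn : 4 ≤ n) (he : Even n)
    (M : Finset (ℕ × ℕ)) (hM : IsNCMatchingN (n - 2) M) (x : ℕ → ℝ)
    (heq : ∀ p ∈ M, x p.1 = x p.2)
    (hlt : ∀ p ∈ M, ∀ q ∈ M, p.1 < q.1 → q.2 < p.2 → x p.1 < x q.1) :
    Hfun (n - 2) x = 0 :=
  main_zero (n - 2) M x hM heq hlt
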